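/- Regret bound for approximate mirror descent: Suppose f : ℝⁿ → ℝ is μ-strongly convex (μ>0) with minimizer x*, and Ψ is a σ-strongly convex mirror potential. Let (x̃_k) be any sequence, and define the exact MD iterates x_{k+1} = (∇Ψ)⁻¹(∇Ψ(x̃_k) − t_k∇f(x̃_k)). Then Σ_{k=1}^K t_k(f(x̃_k) − f(x*)) ≤ B_Ψ(x*, x̃₁) + Σ_{k=1}^K [ (1/σ) t_k² ‖∇f(x̃_k)‖_*² + (1/(2t_kμ) + 1/σ) ‖∇Ψ(x̃_{k+1}) − ∇Ψ(x_{k+1})‖_*² ]. -/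

import Mathlib

open RealInnerProductSpace

lemma AMD.norm_equiv {n : ℕ} (N : EuclideanSpace ℝ (Fin n) → ℝ)
    (hN0 : ∀ x, N x = 0 ↔ x = 0)
    (hNsmul : ∀ (c : ℝ) x, N (c • x) = |c| * N x)
    (hNadd : ∀ x y, N (x + y) ≤ N x + N y) :
    ∃ m > 0, ∀ x, m * ‖x‖ ≤ N x := by
  have hzero : N 0 = 0 := (hN0 0).mpr rfl
  have hneg : ∀ x, N (-x) = N x := by
    intro x; have := hNsmul (-1) x; simpa using this
  have hnonneg : ∀ x, 0 ≤ N x := by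
    intro x
    have h := hNadd x (-x)
    rw [add_neg_cancel, hzero, hneg] at h
    linarith
  -- upper bound : N x ≤ C * ‖x‖
  obtain ⟨C, hC0, hub⟩ : ∃ C, 0 ≤ C ∧ ∀ x, N x ≤ C * ‖x‖ := by
    refine ⟨∑ i : Fin n, N (EuclideanSpace.single i 1), Finset.sum_nonneg fun i _ => hnonneg _, ?_⟩
    intro x
    have hsum : ∑ i, EuclideanSpace.single i (x i) = x := by
      ext j
      rw [WithLp.ofLp_sum, Finset.sum_apply j Finset.univ _]
      simp [EuclideanSpace.single_apply]
    have hsub : ∀ (s : Finset (Fin n)) (g : Fin n → EuclideanSpace ℝ (Fin n)),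
        N (∑ i ∈ s, g i) ≤ ∑ i ∈ s, N (g i) := by
      intro s
      induction s using Finset.cons_induction with
      | empty => intro g; simp [hzero]
      | cons a s ha ih =>
        intro g
        rw [Finset.sum_cons, Finset.sum_cons]
        exact le_trans (hNadd _ _) (by have := ih g; linarith)
    calc N x = N (∑ i, EuclideanSpace.single i (x i)) := by rw [hsum]
      _ ≤ ∑ i, N (EuclideanSpace.single i (x i)) := hsub _ _
      _ ≤ ∑ i : Fin n, N (EuclideanSpace.single i 1) * ‖x‖ := by
          apply Finset.sum_le_sum
          intro i _
          have h1 : (EuclideanSpace.single i (x i) : EuclideanSpace ℝ (Fin n))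
              = (x i) • EuclideanSpace.single i 1 := by
            ext j; by_cases h : j = i <;> simp [EuclideanSpace.single_apply, h, mul_comm]
          have h2 : |x i| ≤ ‖x‖ := by
            have h := abs_real_inner_le_norm (EuclideanSpace.single i (1:ℝ)) x
            simpa [EuclideanSpace.inner_single_left, EuclideanSpace.norm_single] using h
          rw [h1, hNsmul]
          calc |x i| * N (EuclideanSpace.single i 1) ≤ ‖x‖ * N (EuclideanSpace.single i 1) :=
                mul_le_mul_of_nonneg_right h2 (hnonneg _)
            _ = N (EuclideanSpace.single i 1) * ‖x‖ := mul_comm _ _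
      _ = (∑ i : Fin n, N (EuclideanSpace.single i 1)) * ‖x‖ := by rw [Finset.sum_mul]
  -- continuity
  have hcont : Continuous N := by
    have hlip : ∀ x y, |N x - N y| ≤ C * ‖x - y‖ := by
      intro x y
      have h1 : N x ≤ N (x - y) + N y := by
        have := hNadd (x - y) y; simpa using this
      have h2 : N y ≤ N (x - y) + N x := by
        have := hNadd (y - x) x
        rw [sub_add_cancel] at this
        have hn : N (y - x) = N (x - y) := by rw [← hneg (y - x)]; congr 1; abel
        linarith [this, hn.le, hn.ge]
      have := hub (x - y)
      rw [abs_sub_le_iff]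
      constructor <;> linarith
    rw [Metric.continuous_iff]
    intro x ε hε
    rcases eq_or_lt_of_le hC0 with hC | hC
    · exact ⟨1, one_pos, fun y _ => by
        have := hlip y x
        rw [← hC] at this
        simp at this
        simpa [Real.dist_eq, this] using hε⟩
    · refine ⟨ε / C, div_pos hε hC, fun y hy => ?_⟩
      have := hlip y x
      rw [Real.dist_eq]
      calc |N y - N x| ≤ C * ‖y - x‖ := this
        _ < C * (ε / C) := by
            apply mul_lt_mul_of_pos_left _ hC
            rw [dist_eq_norm] at hy; exact hy
        _ = ε := by field_simp
  rcases Nat.eq_zero_or_pos n with hn | hn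
  · refine ⟨1, one_pos, fun x => ?_⟩
    have hx : x = 0 := by subst hn; ext i; exact absurd i.2 (by omega)
    simp [hx, hzero]
  · haveI : NeZero n := ⟨hn.ne'⟩
    have hcompact : IsCompact (Metric.sphere (0 : EuclideanSpace ℝ (Fin n)) 1) :=
      isCompact_sphere 0 1
    have hne : (Metric.sphere (0 : EuclideanSpace ℝ (Fin n)) 1).Nonempty :=
      ⟨EuclideanSpace.single 0 1, by simp [EuclideanSpace.norm_single]⟩
    obtain ⟨x₀, hx₀mem, hx₀min⟩ := hcompact.exists_isMinOn hne hcont.continuousOn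
    have hx₀norm : ‖x₀‖ = 1 := by simpa using hx₀mem
    have hx₀ne : x₀ ≠ 0 := by
      intro h; rw [h] at hx₀norm; simp at hx₀norm
    have hm : 0 < N x₀ := lt_of_le_of_ne (hnonneg x₀) (fun h => hx₀ne ((hN0 x₀).mp h.symm))
    refine ⟨N x₀, hm, fun x => ?_⟩
    rcases eq_or_ne x 0 with hx | hx
    · simp [hx, hzero]
    · have hxn : 0 < ‖x‖ := norm_pos_iff.mpr hx
      set u := ‖x‖⁻¹ • x with hu
      have humem : u ∈ Metric.sphere (0 : EuclideanSpace ℝ (Fin n)) 1 := by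
        simp [hu, norm_smul, abs_of_pos (inv_pos.mpr hxn), inv_mul_cancel₀ hxn.ne']
      have h1 : N x₀ ≤ N u := hx₀min humem
      have h2 : N x = ‖x‖ * N u := by
        have hx' : ‖x‖ • u = x := smul_inv_smul₀ hxn.ne' x
        conv_lhs => rw [← hx']
        rw [hNsmul, abs_of_pos hxn]
      nlinarith
lemma AMD.dual_pair {n : ℕ} (N : EuclideanSpace ℝ (Fin n) → ℝ)
    (hN0 : ∀ x, N x = 0 ↔ x = 0)
    (hNsmul : ∀ (c : ℝ) x, N (c • x) = |c| * N x)
    (hNadd : ∀ x y, N (x + y) ≤ N x + N y)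
    (Nstar : EuclideanSpace ℝ (Fin n) → ℝ)
    (hNstar : ∀ y, Nstar y = sSup {r | ∃ x, N x ≤ 1 ∧ r = ⟪y, x⟫}) :
    (∀ y, 0 ≤ Nstar y) ∧ (∀ y x, ⟪y, x⟫ ≤ Nstar y * N x) := by
  obtain ⟨m, hm, hlb⟩ := AMD.norm_equiv N hN0 hNsmul hNadd
  have hzero : N 0 = 0 := (hN0 0).mpr rfl
  have hnonneg : ∀ x, 0 ≤ N x := by
    intro x
    have := hlb x
    nlinarith [norm_nonneg x]
  have hbdd : ∀ y, BddAbove {r | ∃ x, N x ≤ 1 ∧ r = ⟪y, x⟫} := by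
    intro y
    refine ⟨‖y‖ / m, fun r hr => ?_⟩
    obtain ⟨x, hx, rfl⟩ := hr
    have h1 : ⟪y, x⟫ ≤ ‖y‖ * ‖x‖ := real_inner_le_norm y x
    have h2 : m * ‖x‖ ≤ N x := hlb x
    have h3 : ‖x‖ ≤ 1 / m := by rw [le_div_iff₀ hm]; nlinarith
    calc ⟪y, x⟫ ≤ ‖y‖ * ‖x‖ := h1
      _ ≤ ‖y‖ * (1 / m) := mul_le_mul_of_nonneg_left h3 (norm_nonneg y)
      _ = ‖y‖ / m := by ring
  have h0mem : ∀ y, (0:ℝ) ∈ {r | ∃ x, N x ≤ 1 ∧ r = ⟪y, x⟫} := by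
    intro y
    exact ⟨0, by simp [hzero], by simp⟩
  have hpos : ∀ y, 0 ≤ Nstar y := by
    intro y; rw [hNstar]
    exact le_csSup (hbdd y) (h0mem y)
  refine ⟨hpos, fun y x => ?_⟩
  rcases eq_or_lt_of_le (hnonneg x) with hNx | hNx
  · have hx0 : x = 0 := (hN0 x).mp hNx.symm
    simp [hx0, hzero]
  · set u := (N x)⁻¹ • x with hu
    have hNu : N u ≤ 1 := by
      rw [hu, hNsmul, abs_of_pos (inv_pos.mpr hNx), inv_mul_cancel₀ hNx.ne']
    have hmem : ⟪y, u⟫ ∈ {r | ∃ x, N x ≤ 1 ∧ r = ⟪y, x⟫} := ⟨u, hNu, rfl⟩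
    have h1 : ⟪y, u⟫ ≤ Nstar y := by
      rw [hNstar]; exact le_csSup (hbdd y) hmem
    have h2 : ⟪y, x⟫ = N x * ⟪y, u⟫ := by
      have hx' : (N x) • u = x := smul_inv_smul₀ hNx.ne' x
      conv_lhs => rw [← hx']
      rw [real_inner_smul_right]
    rw [h2, mul_comm (Nstar y) (N x)]
    exact mul_le_mul_of_nonneg_left h1 hNx.le


set_option maxHeartbeats 2000000 in
lemma AMD.step_arith (σ μ tk G D A1 A2 A3 Bxa Bxc Bab Bba Bcb
    ipgab ipdcb ipdba ipdax ipgax dfa : ℝ)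
    (hσ : 0 < σ) (hμ : 0 < μ) (htk : 0 < tk)
    (hG : 0 ≤ G) (hD : 0 ≤ D) (hA1 : 0 ≤ A1) (hA2 : 0 ≤ A2) (hA3 : 0 ≤ A3)
    (hid : tk * ipgax = Bxa - Bxc + Bab - Bcb + ipdcb + ipdba + ipdax)
    (hid2 : Bab + Bba = tk * ipgab)
    (hBab : σ / 2 * A1 ^ 2 ≤ Bab) (hBba : σ / 2 * A1 ^ 2 ≤ Bba)
    (hBcb : σ / 2 * A2 ^ 2 ≤ Bcb)
    (hgab : ipgab ≤ G * A1) (hdcb : ipdcb ≤ D * A2)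
    (hdba : ipdba ≤ D * A1) (hdax : ipdax ≤ D * A3)
    (hsc : dfa ≤ ipgax - μ / 2 * A3 ^ 2) :
    tk * dfa ≤ (Bxa - Bxc)
      + (1 / σ * tk ^ 2 * G ^ 2 + (1 / (2 * tk * μ) + 1 / σ) * D ^ 2) := by
  have hA1le : σ * A1 ≤ tk * G := by
    have h1 : tk * ipgab ≤ tk * (G * A1) := mul_le_mul_of_nonneg_left hgab htk.le
    have hA1sq : σ * A1 ^ 2 ≤ tk * G * A1 := by nlinarith
    rcases hA1.eq_or_lt with h | h
    · rw [← h, mul_zero]; positivity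
    · nlinarith
  have hi : Bab ≤ tk ^ 2 * G ^ 2 / (2 * σ) := by
    rw [le_div_iff₀ (by positivity)]
    have h1 : tk * ipgab ≤ tk * (G * A1) := mul_le_mul_of_nonneg_left hgab htk.le
    nlinarith [sq_nonneg (tk * G - σ * A1)]
  have hii : ipdba ≤ (tk ^ 2 * G ^ 2 + D ^ 2) / (2 * σ) := by
    rw [le_div_iff₀ (by positivity)]
    have h1 : D * A1 * σ ≤ D * (tk * G) := by nlinarith [mul_le_mul_of_nonneg_left hA1le hD]
    nlinarith [sq_nonneg (tk * G - D)]
  have hiii : ipdcb - Bcb ≤ D ^ 2 / (2 * σ) := by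
    have h2 : D * A2 - σ / 2 * A2 ^ 2 ≤ D ^ 2 / (2 * σ) := by
      rw [le_div_iff₀ (by positivity)]
      nlinarith [sq_nonneg (D - σ * A2)]
    linarith
  have hiv : ipdax - tk * μ / 2 * A3 ^ 2 ≤ D ^ 2 / (2 * tk * μ) := by
    have h2 : D * A3 - tk * μ / 2 * A3 ^ 2 ≤ D ^ 2 / (2 * tk * μ) := by
      rw [le_div_iff₀ (by positivity)]
      nlinarith [sq_nonneg (D - tk * μ * A3)]
    linarith
  have hv : tk * dfa ≤ tk * ipgax - tk * μ / 2 * A3 ^ 2 := by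
    have h3 := mul_le_mul_of_nonneg_left hsc htk.le
    exact h3.trans_eq (by ring)
  have e1 : tk ^ 2 * G ^ 2 / (2 * σ) + (tk ^ 2 * G ^ 2 + D ^ 2) / (2 * σ)
      + D ^ 2 / (2 * σ) + D ^ 2 / (2 * tk * μ)
      = 1 / σ * tk ^ 2 * G ^ 2 + (1 / (2 * tk * μ) + 1 / σ) * D ^ 2 := by
    field_simp
    ring
  linarith

set_option maxHeartbeats 800000 in
theorem approximate_mirror_descent_regret_bound {n : ℕ}
    -- an arbitrary norm N on ℝⁿ and its dual norm Nstar
    (N : EuclideanSpace ℝ (Fin n) → ℝ)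
    (hN0 : ∀ x, N x = 0 ↔ x = 0)
    (hNsmul : ∀ (c : ℝ) x, N (c • x) = |c| * N x)
    (hNadd : ∀ x y, N (x + y) ≤ N x + N y)
    (Nstar : EuclideanSpace ℝ (Fin n) → ℝ)
    (hNstar : ∀ y, Nstar y = sSup {r | ∃ x, N x ≤ 1 ∧ r = ⟪y, x⟫})
    -- objective: μ-strongly convex with minimizer xstar
    (f : EuclideanSpace ℝ (Fin n) → ℝ) (hfdiff : Differentiable ℝ f)
    (μ : ℝ) (hμ : 0 < μ)
    (hfstrong : ∀ x y, f y ≥ f x + ⟪gradient f x, y - x⟫ + μ / 2 * (N (y - x)) ^ 2)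
    (xstar : EuclideanSpace ℝ (Fin n)) (hmin : ∀ x, f xstar ≤ f x)
    -- mirror potential, σ-strongly convex w.r.t. N
    (Ψ : EuclideanSpace ℝ (Fin n) → ℝ) (hΨ : ContDiff ℝ 1 Ψ) (σ : ℝ) (hσ : 0 < σ)
    (hstrong : ∀ x y, Ψ y ≥ Ψ x + ⟪gradient Ψ x, y - x⟫ + σ / 2 * (N (y - x)) ^ 2)
    (B : EuclideanSpace ℝ (Fin n) → EuclideanSpace ℝ (Fin n) → ℝ)
    (hB : ∀ x y, B x y = Ψ x - Ψ y - ⟪gradient Ψ y, x - y⟫)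
    -- approximate iterates (x̃_k) and exact MD iterates (x_k)
    (t : ℕ → ℝ) (ht : ∀ k, 0 < t k)
    (xt : ℕ → EuclideanSpace ℝ (Fin n)) (xs : ℕ → EuclideanSpace ℝ (Fin n))
    (hexact : ∀ k, gradient Ψ (xs (k + 1)) = gradient Ψ (xt k) - t k • gradient f (xt k))
    (K : ℕ) :
    ∑ k ∈ Finset.Icc 1 K, t k * (f (xt k) - f xstar)
      ≤ B xstar (xt 1)
        + ∑ k ∈ Finset.Icc 1 K,
          ((1 / σ) * (t k) ^ 2 * (Nstar (gradient f (xt k))) ^ 2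
            + (1 / (2 * t k * μ) + 1 / σ)
              * (Nstar (gradient Ψ (xt (k + 1)) - gradient Ψ (xs (k + 1)))) ^ 2) := by
  obtain ⟨hNsnn, hdual⟩ := AMD.dual_pair N hN0 hNsmul hNadd Nstar hNstar
  have hzero : N 0 = 0 := (hN0 0).mpr rfl
  have hneg : ∀ x, N (-x) = N x := by
    intro x; have := hNsmul (-1) x; simpa using this
  have hNnn : ∀ x, 0 ≤ N x := by
    intro x
    have h := hNadd x (-x)
    rw [add_neg_cancel, hzero, hneg] at h
    linarith
  have hsymm : ∀ x y, N (x - y) = N (y - x) := by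
    intro x y
    rw [← hneg (x - y)]; congr 1; abel
  -- Bregman divergence lower bound
  have hBsc : ∀ x y, σ / 2 * (N (x - y)) ^ 2 ≤ B x y := by
    intro x y
    rw [hB]
    have := hstrong y x
    linarith
  have hBnn : ∀ x y, 0 ≤ B x y := fun x y =>
    le_trans (by positivity) (hBsc x y)
  -- per-step inequality
  have hstep : ∀ k, t k * (f (xt k) - f xstar)
      ≤ (B xstar (xt k) - B xstar (xt (k + 1)))
        + ((1 / σ) * (t k) ^ 2 * (Nstar (gradient f (xt k))) ^ 2
            + (1 / (2 * t k * μ) + 1 / σ)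
              * (Nstar (gradient Ψ (xt (k + 1)) - gradient Ψ (xs (k + 1)))) ^ 2) := by
    intro k
    set a := xt k with ha
    set b := xs (k + 1) with hbdef
    set c := xt (k + 1) with hc
    set g := gradient f (xt k) with hg
    set d := gradient Ψ c - gradient Ψ b with hd
    set tk := t k with htk
    have htkpos : 0 < tk := ht k
    set G := Nstar g with hG
    set D := Nstar d with hD
    have hGnn : 0 ≤ G := hNsnn g
    have hDnn : 0 ≤ D := hNsnn d
    set A1 := N (a - b) with hA1def
    set A2 := N (c - b) with hA2def
    set A3 := N (xstar - a) with hA3def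
    have hA1nn : 0 ≤ A1 := hNnn _
    have hA2nn : 0 ≤ A2 := hNnn _
    have hA3nn : 0 ≤ A3 := hNnn _
    have hgb : gradient Ψ b = gradient Ψ a - tk • g := hexact k
    -- main algebraic identity
    have hid : tk * ⟪g, a - xstar⟫
        = B xstar a - B xstar c + B a b - B c b
          + ⟪d, c - b⟫ + ⟪d, b - a⟫ + ⟪d, a - xstar⟫ := by
      simp only [hB, hd, hgb]
      simp only [inner_sub_left, inner_sub_right, real_inner_smul_left]
      ring
    have hid2 : B a b + B b a = tk * ⟪g, a - b⟫ := by
      simp only [hB, hgb]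
      simp only [inner_sub_left, inner_sub_right, real_inner_smul_left]
      ring
    -- bounds
    have hBab_lb : σ / 2 * A1 ^ 2 ≤ B a b := by
      have := hBsc a b; simpa [hA1def] using this
    have hBba_lb : σ / 2 * A1 ^ 2 ≤ B b a := by
      have := hBsc b a
      rw [hsymm b a] at this
      simpa [hA1def] using this
    have hBcb_lb : σ / 2 * A2 ^ 2 ≤ B c b := by
      have := hBsc c b; simpa [hA2def] using this
    have hgab : ⟪g, a - b⟫ ≤ G * A1 := hdual g (a - b)
    have hdcb : ⟪d, c - b⟫ ≤ D * A2 := hdual d (c - b)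
    have hdba : ⟪d, b - a⟫ ≤ D * A1 := by
      have := hdual d (b - a)
      rw [hsymm b a] at this
      simpa [hA1def] using this
    have hdax : ⟪d, a - xstar⟫ ≤ D * A3 := by
      have := hdual d (a - xstar)
      rw [hsymm a xstar] at this
      simpa [hA3def] using this
    have hsc : f a - f xstar ≤ ⟪g, a - xstar⟫ - μ / 2 * A3 ^ 2 := by
      have h1 := hfstrong a xstar
      have hflip : ⟪g, xstar - a⟫ = -⟪g, a - xstar⟫ := by
        rw [show xstar - a = -(a - xstar) by abel, inner_neg_right]
      rw [hflip, ← hA3def] at h1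
      linarith only [h1]
    exact AMD.step_arith σ μ tk G D A1 A2 A3 (B xstar a) (B xstar c) (B a b) (B b a)
      (B c b) ⟪g, a - b⟫ ⟪d, c - b⟫ ⟪d, b - a⟫ ⟪d, a - xstar⟫ ⟪g, a - xstar⟫
      (f a - f xstar) hσ hμ htkpos hGnn hDnn hA1nn hA2nn hA3nn hid hid2
      hBab_lb hBba_lb hBcb_lb hgab hdcb hdba hdax hsc
  -- telescoping sum
  have htele : ∀ m : ℕ, ∑ k ∈ Finset.Icc 1 m, (B xstar (xt k) - B xstar (xt (k + 1)))
      = B xstar (xt 1) - B xstar (xt (m + 1)) := by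
    intro m
    induction m with
    | zero => simp
    | succ p ih =>
      rw [Finset.sum_Icc_succ_top (by omega : 1 ≤ p + 1), ih]
      ring
  have hsum : ∑ k ∈ Finset.Icc 1 K, t k * (f (xt k) - f xstar)
      ≤ ∑ k ∈ Finset.Icc 1 K, ((B xstar (xt k) - B xstar (xt (k + 1)))
        + ((1 / σ) * (t k) ^ 2 * (Nstar (gradient f (xt k))) ^ 2
            + (1 / (2 * t k * μ) + 1 / σ)
              * (Nstar (gradient Ψ (xt (k + 1)) - gradient Ψ (xs (k + 1)))) ^ 2)) :=
    Finset.sum_le_sum fun k _ => hstep k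
  rw [Finset.sum_add_distrib, htele K] at hsum
  have := hBnn xstar (xt (K + 1))
  linarith
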